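/- Let α₁, α₂, α₃ ∈ ℝ. The following are equivalent: (i) for every twice continuously differentiable matrix field P : ℝ³ → Sym(3) with values in the symmetric 3×3 matrices, the matrix Curl(α₁ dev sym Curl P + α₂ skew Curl P + α₃ tr(Curl P)·𝟙) is symmetric at every point; (ii) α₁ = −α₂. -/

import Mathlib

open Matrix

/-- Partial derivative in direction `j` of a scalar field on `ℝ³`. -/
noncomputable def pd (j : Fin 3) (f : (Fin 3 → ℝ) → ℝ) (x : Fin 3 → ℝ) : ℝ :=
  fderiv ℝ f x (Pi.single j 1)

/-- Gradient of a scalar field on `ℝ³`. -/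
noncomputable def grad3 (f : (Fin 3 → ℝ) → ℝ) (x : Fin 3 → ℝ) : Fin 3 → ℝ :=
  fun i => pd i f x

/-- Classical curl of a vector field on `ℝ³`. -/
noncomputable def vcurl (v : (Fin 3 → ℝ) → Fin 3 → ℝ) (x : Fin 3 → ℝ) : Fin 3 → ℝ :=
  ![pd 1 (fun y => v y 2) x - pd 2 (fun y => v y 1) x,
    pd 2 (fun y => v y 0) x - pd 0 (fun y => v y 2) x,
    pd 0 (fun y => v y 1) x - pd 1 (fun y => v y 0) x]

/-- Divergence of a vector field on `ℝ³`. -/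
noncomputable def vdiv (v : (Fin 3 → ℝ) → Fin 3 → ℝ) (x : Fin 3 → ℝ) : ℝ :=
  ∑ i, pd i (fun y => v y i) x

/-- Row-wise Curl of a matrix field on `ℝ³`: the `i`-th row of `mCurl P`
is the curl of the `i`-th row of `P`. -/
noncomputable def mCurl (P : (Fin 3 → ℝ) → Matrix (Fin 3) (Fin 3) ℝ) (x : Fin 3 → ℝ) :
    Matrix (Fin 3) (Fin 3) ℝ :=
  Matrix.of fun i j => vcurl (fun y => P y i) x j

/-- Jacobian matrix of a vector field on `ℝ³`. -/
noncomputable def jac (v : (Fin 3 → ℝ) → Fin 3 → ℝ) (x : Fin 3 → ℝ) :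
    Matrix (Fin 3) (Fin 3) ℝ :=
  Matrix.of fun i j => pd j (fun y => v y i) x

/-- Axial vector of a (skew-symmetric) `3 × 3` matrix: with `A 1 2 = -a₁`,
`A 2 0 = -a₂`, `A 0 1 = -a₃` (so `A 2 1 = a₁`, `A 0 2 = a₂`, `A 1 0 = a₃`). -/
def axl (A : Matrix (Fin 3) (Fin 3) ℝ) : Fin 3 → ℝ :=
  ![A 2 1, A 0 2, A 1 0]

/-- The skew-symmetric matrix `anti a` characterized by `(anti a) ⬝ v = a × v`. -/
def antiM (a : Fin 3 → ℝ) : Matrix (Fin 3) (Fin 3) ℝ :=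
  !![0, -a 2, a 1; a 2, 0, -a 0; -a 1, a 0, 0]

/-- Symmetric part of a matrix. -/
noncomputable def symM (X : Matrix (Fin 3) (Fin 3) ℝ) : Matrix (Fin 3) (Fin 3) ℝ :=
  (1 / 2 : ℝ) • (X + Xᵀ)

/-- Skew-symmetric part of a matrix. -/
noncomputable def skewM (X : Matrix (Fin 3) (Fin 3) ℝ) : Matrix (Fin 3) (Fin 3) ℝ :=
  (1 / 2 : ℝ) • (X - Xᵀ)

/-- Deviatoric (trace-free) part of a matrix. -/
noncomputable def devM (X : Matrix (Fin 3) (Fin 3) ℝ) : Matrix (Fin 3) (Fin 3) ℝ :=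
  X - (Matrix.trace X / 3) • (1 : Matrix (Fin 3) (Fin 3) ℝ)

/-- Frobenius inner product `⟨X, Y⟩ = tr (X Yᵀ)`. -/
noncomputable def minner (X Y : Matrix (Fin 3) (Fin 3) ℝ) : ℝ :=
  Matrix.trace (X * Yᵀ)

/-- Squared Frobenius norm. -/
noncomputable def mnormSq (X : Matrix (Fin 3) (Fin 3) ℝ) : ℝ :=
  minner X X

/-- Squared Euclidean norm of a vector in `ℝ³`. -/
def vnormSq (v : Fin 3 → ℝ) : ℝ :=
  ∑ i, (v i) ^ 2



lemma pd_const (c : ℝ) (j : Fin 3) (x : Fin 3 → ℝ) : pd j (fun _ => c) x = 0 := by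
  simp [pd]

lemma pd_sub {f g : (Fin 3 → ℝ) → ℝ} {x : Fin 3 → ℝ} (hf : DifferentiableAt ℝ f x)
    (hg : DifferentiableAt ℝ g x) (j : Fin 3) :
    pd j (fun y => f y - g y) x = pd j f x - pd j g x := by
  simp [pd, fderiv_fun_sub hf hg]

lemma pd_const_mul {f : (Fin 3 → ℝ) → ℝ} {x : Fin 3 → ℝ} (hf : DifferentiableAt ℝ f x)
    (c : ℝ) (j : Fin 3) : pd j (fun y => c * f y) x = c * pd j f x := by
  simp [pd, fderiv_const_mul hf c]

lemma pd_proj (i j : Fin 3) (x : Fin 3 → ℝ) :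
    pd j (fun y => y i) x = if i = j then 1 else 0 := by
  have h : (fun y : Fin 3 → ℝ => y i) = fun y => (ContinuousLinearMap.proj (R := ℝ) (φ := fun _ : Fin 3 => ℝ) i) y := rfl
  rw [pd, h, ContinuousLinearMap.fderiv]
  simp [Pi.single_apply, eq_comm]

lemma pd_mul {f g : (Fin 3 → ℝ) → ℝ} {x : Fin 3 → ℝ} (hf : DifferentiableAt ℝ f x)
    (hg : DifferentiableAt ℝ g x) (j : Fin 3) :
    pd j (fun y => f y * g y) x = pd j f x * g x + f x * pd j g x := by
  simp [pd, fderiv_fun_mul hf hg]; ring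

lemma differentiable_pd {f : (Fin 3 → ℝ) → ℝ} (hf : ContDiff ℝ 2 f) (k : Fin 3) :
    Differentiable ℝ (fun y => pd k f y) := by
  have h1 : ContDiff ℝ 1 (fderiv ℝ f) := hf.fderiv_right (le_refl _)
  have h2 : ContDiff ℝ 1 (fun y => fderiv ℝ f y (Pi.single k 1)) :=
    h1.clm_apply contDiff_const
  exact h2.differentiable one_ne_zero

lemma pd_comm {f : (Fin 3 → ℝ) → ℝ} (hf : ContDiff ℝ 2 f) (a b : Fin 3) (x : Fin 3 → ℝ) :
    pd a (fun y => pd b f y) x = pd b (fun y => pd a f y) x := by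
  have hs : IsSymmSndFDerivAt ℝ f x := (hf.contDiffAt).isSymmSndFDerivAt (by rw [minSmoothness_of_isRCLikeNormedField])
  have h1 : ContDiff ℝ 1 (fderiv ℝ f) := hf.fderiv_right (le_refl _)
  have hdd : DifferentiableAt ℝ (fderiv ℝ f) x := (h1.differentiable one_ne_zero) x
  have key : ∀ v w : Fin 3 → ℝ,
      fderiv ℝ (fun y => fderiv ℝ f y v) x w = fderiv ℝ (fderiv ℝ f) x w v := by
    intro v w
    rw [fderiv_clm_apply hdd (differentiableAt_const v)]
    simp
  unfold pd
  rw [key, key, hs.eq]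

lemma mat_ext3 {A B : Matrix (Fin 3) (Fin 3) ℝ}
    (h00 : A 0 0 = B 0 0) (h01 : A 0 1 = B 0 1) (h02 : A 0 2 = B 0 2)
    (h10 : A 1 0 = B 1 0) (h11 : A 1 1 = B 1 1) (h12 : A 1 2 = B 1 2)
    (h20 : A 2 0 = B 2 0) (h21 : A 2 1 = B 2 1) (h22 : A 2 2 = B 2 2) : A = B := by
  refine Matrix.ext fun i j => ?_
  fin_cases i <;> fin_cases j <;> assumption

lemma forward_dir (α₁ α₂ α₃ : ℝ)
    (H : ∀ P : (Fin 3 → ℝ) → Matrix (Fin 3) (Fin 3) ℝ,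
      (∀ x, (P x)ᵀ = P x) →
      (∀ i j, ContDiff ℝ 2 (fun y => P y i j)) →
      ∀ x : Fin 3 → ℝ,
        (mCurl (fun y =>
            α₁ • devM (symM (mCurl P y)) + α₂ • skewM (mCurl P y) +
              (α₃ * Matrix.trace (mCurl P y)) • (1 : Matrix (Fin 3) (Fin 3) ℝ)) x)ᵀ =
          mCurl (fun y =>
            α₁ • devM (symM (mCurl P y)) + α₂ • skewM (mCurl P y) +
              (α₃ * Matrix.trace (mCurl P y)) • (1 : Matrix (Fin 3) (Fin 3) ℝ)) x) :
    α₁ = -α₂ := by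
  set W := (fun y : Fin 3 → ℝ => !![y 0 * y 1, (0:ℝ), 0; 0, 0, 0; 0, 0, 0]) with hWdef
  have hc0 : ContDiff ℝ 2 (fun y : Fin 3 → ℝ => y 0) :=
    (ContinuousLinearMap.proj (R := ℝ) (φ := fun _ : Fin 3 => ℝ) 0).contDiff
  have hc1 : ContDiff ℝ 2 (fun y : Fin 3 → ℝ => y 1) :=
    (ContinuousLinearMap.proj (R := ℝ) (φ := fun _ : Fin 3 => ℝ) 1).contDiff
  have hd0 : ∀ y : Fin 3 → ℝ, DifferentiableAt ℝ (fun z : Fin 3 → ℝ => z 0) y :=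
    fun y => ((hc0.differentiable two_ne_zero) y)
  have hd1 : ∀ y : Fin 3 → ℝ, DifferentiableAt ℝ (fun z : Fin 3 → ℝ => z 1) y :=
    fun y => ((hc1.differentiable two_ne_zero) y)
  have hWsym : ∀ x, (W x)ᵀ = W x := by
    intro x
    refine mat_ext3 ?_ ?_ ?_ ?_ ?_ ?_ ?_ ?_ ?_ <;> rfl
  have hW2 : ∀ i j, ContDiff ℝ 2 (fun y => W y i j) := by
    intro i j
    fin_cases i <;> fin_cases j <;>
      first
        | exact hc0.mul hc1
        | exact contDiff_const
  have hpd0 : ∀ (a : Fin 3) (y : Fin 3 → ℝ), pd a (fun _ : Fin 3 → ℝ => (0:ℝ)) y = 0 :=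
    fun a y => pd_const 0 a y
  have hpdprod : ∀ (a : Fin 3) (y : Fin 3 → ℝ),
      pd a (fun z : Fin 3 → ℝ => z 0 * z 1) y
        = (if (0 : Fin 3) = a then 1 else 0) * y 1 + y 0 * (if (1 : Fin 3) = a then 1 else 0) := by
    intro a y
    rw [pd_mul (hd0 y) (hd1 y) a, pd_proj, pd_proj]
  have hpdlin : ∀ (c : ℝ) (i a : Fin 3) (y : Fin 3 → ℝ),
      pd a (fun z : Fin 3 → ℝ => c * z i) y = c * (if i = a then 1 else 0) := by
    intro c i a y
    rcases (show i = 0 ∨ i = 1 ∨ i = 2 by omega) with h | h | h <;> subst h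
    · rw [pd_const_mul (hd0 y) c a, pd_proj]
    · rw [pd_const_mul (hd1 y) c a, pd_proj]
    · have hd2 : DifferentiableAt ℝ (fun z : Fin 3 → ℝ => z 2) y :=
        ((ContinuousLinearMap.proj (R := ℝ) (φ := fun _ : Fin 3 => ℝ) 2).contDiff.differentiable
          one_ne_zero y : DifferentiableAt ℝ (fun z : Fin 3 → ℝ => z 2) y)
      rw [pd_const_mul hd2 c a, pd_proj]
  have hC : ∀ y : Fin 3 → ℝ, mCurl W y = !![0, 0, -(y 0); 0, 0, 0; 0, 0, 0] := by
    intro y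
    refine mat_ext3 ?_ ?_ ?_ ?_ ?_ ?_ ?_ ?_ ?_ <;>
    · simp only [hWdef, mCurl, vcurl, Matrix.of_apply, Matrix.cons_val_zero,
        Matrix.cons_val_one, Matrix.head_cons, Matrix.cons_val_two, Matrix.tail_cons]
      simp only [hpdprod, hpd0]
      norm_num [show ¬((0:Fin 3) = 1) from by decide, show ¬((0:Fin 3) = 2) from by decide,
        show ¬((1:Fin 3) = 0) from by decide, show ¬((1:Fin 3) = 2) from by decide,
        show ¬((2:Fin 3) = 0) from by decide, show ¬((2:Fin 3) = 1) from by decide]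
  have hQf : (fun y =>
          α₁ • devM (symM (mCurl W y)) + α₂ • skewM (mCurl W y) +
            (α₃ * Matrix.trace (mCurl W y)) • (1 : Matrix (Fin 3) (Fin 3) ℝ)) =
      fun y : Fin 3 → ℝ =>
        !![0, 0, -((α₁ + α₂)/2) * y 0; 0, 0, 0; -((α₁ - α₂)/2) * y 0, 0, 0] := by
    funext y
    rw [hC y]
    refine mat_ext3 ?_ ?_ ?_ ?_ ?_ ?_ ?_ ?_ ?_ <;>
    · simp only [devM, symM, skewM, Matrix.trace, Matrix.diag, Fin.sum_univ_three,
        Matrix.smul_apply, Matrix.add_apply, Matrix.sub_apply, Matrix.transpose_apply,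
        Matrix.one_apply, Matrix.of_apply, Matrix.cons_val_zero, Matrix.cons_val_one,
        Matrix.head_cons, Matrix.cons_val_two, Matrix.tail_cons, smul_eq_mul]
      norm_num
      try ring
  have H0 := H W hWsym hW2 (fun _ => 0)
  rw [hQf] at H0
  set Qe : (Fin 3 → ℝ) → Matrix (Fin 3) (Fin 3) ℝ :=
    fun y => !![0, 0, -((α₁ + α₂)/2) * y 0; 0, 0, 0; -((α₁ - α₂)/2) * y 0, 0, 0] with hQe
  have h01 : mCurl Qe (fun _ => 0) 1 0 = mCurl Qe (fun _ => 0) 0 1 :=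
    congrFun (congrFun H0 0) 1
  have v01 : mCurl Qe (fun _ => 0) 0 1 = (α₁ + α₂)/2 := by
    simp only [hQe, mCurl, vcurl, Matrix.of_apply, Matrix.cons_val_zero,
      Matrix.cons_val_one, Matrix.head_cons, Matrix.cons_val_two, Matrix.tail_cons]
    simp only [hpdlin, hpd0]
    norm_num [show ¬((0:Fin 3) = 1) from by decide, show ¬((0:Fin 3) = 2) from by decide,
      show ¬((1:Fin 3) = 0) from by decide, show ¬((1:Fin 3) = 2) from by decide,
      show ¬((2:Fin 3) = 0) from by decide, show ¬((2:Fin 3) = 1) from by decide]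
  have v10 : mCurl Qe (fun _ => 0) 1 0 = 0 := by
    simp only [hQe, mCurl, vcurl, Matrix.of_apply, Matrix.cons_val_zero,
      Matrix.cons_val_one, Matrix.head_cons, Matrix.cons_val_two, Matrix.tail_cons]
    simp only [hpdlin, hpd0]
    norm_num [show ¬((0:Fin 3) = 1) from by decide, show ¬((0:Fin 3) = 2) from by decide,
      show ¬((1:Fin 3) = 0) from by decide, show ¬((1:Fin 3) = 2) from by decide,
      show ¬((2:Fin 3) = 0) from by decide, show ¬((2:Fin 3) = 1) from by decide]
  rw [v01, v10] at h01
  linarith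
/-- For symmetric-valued matrix fields P, the matrix
Curl(α₁ dev sym Curl P + α₂ skew Curl P + α₃ tr(Curl P)·𝟙) is symmetric at
every point for every such P if and only if α₁ = −α₂. -/
theorem sym_curl_moment_iff
    (α₁ α₂ α₃ : ℝ) :
    (∀ P : (Fin 3 → ℝ) → Matrix (Fin 3) (Fin 3) ℝ,
      (∀ x, (P x)ᵀ = P x) →
      (∀ i j, ContDiff ℝ 2 (fun y => P y i j)) →
      ∀ x : Fin 3 → ℝ,
        (mCurl (fun y =>
            α₁ • devM (symM (mCurl P y)) + α₂ • skewM (mCurl P y) +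
              (α₃ * Matrix.trace (mCurl P y)) • (1 : Matrix (Fin 3) (Fin 3) ℝ)) x)ᵀ =
          mCurl (fun y =>
            α₁ • devM (symM (mCurl P y)) + α₂ • skewM (mCurl P y) +
              (α₃ * Matrix.trace (mCurl P y)) • (1 : Matrix (Fin 3) (Fin 3) ℝ)) x) ↔
      α₁ = -α₂ := by
  constructor
  · intro H
    -- forward direction, proved below with an explicit witness
    exact forward_dir α₁ α₂ α₃ H
  · intro h P hP hP2 x
    have hα₂ : α₂ = -α₁ := by linarith
    have hsym : ∀ l m : Fin 3, (fun z : Fin 3 → ℝ => P z l m) = fun z => P z m l := by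
      intro l m; funext z
      have hz := congrFun (congrFun (hP z) m) l
      simpa [Matrix.transpose_apply] using hz
    have htr : ∀ y, Matrix.trace (mCurl P y) = 0 := by
      intro y
      simp only [Matrix.trace, Matrix.diag, mCurl, vcurl, Matrix.of_apply,
        Fin.sum_univ_three, Matrix.cons_val_zero, Matrix.cons_val_one, Matrix.head_cons,
        Matrix.cons_val_two, Matrix.tail_cons]
      simp only [hsym 1 0, hsym 2 0, hsym 2 1]
      ring
    have hQ : (fun y =>
              α₁ • devM (symM (mCurl P y)) + α₂ • skewM (mCurl P y) +
                (α₃ * Matrix.trace (mCurl P y)) • (1 : Matrix (Fin 3) (Fin 3) ℝ)) =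
        fun y => α₁ • (mCurl P y)ᵀ := by
      funext y
      simp only [devM, symM, skewM, htr y, Matrix.trace_smul, Matrix.trace_add,
        Matrix.trace_sub, Matrix.trace_transpose, hα₂, mul_zero, zero_smul, smul_eq_mul,
        add_zero, smul_zero, zero_div]
      module
    rw [hQ]
    have key : ∀ (c : ℝ) (k a b l₁ m₁ l₂ m₂ : Fin 3) (x : Fin 3 → ℝ),
        pd k (fun y => c * (pd a (fun z => P z l₁ m₁) y - pd b (fun z => P z l₂ m₂) y)) x
        = c * pd k (fun y => pd a (fun z => P z l₁ m₁) y) x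
          - c * pd k (fun y => pd b (fun z => P z l₂ m₂) y) x := by
      intro c k a b l₁ m₁ l₂ m₂ x
      rw [pd_const_mul (f := fun y => pd a (fun z => P z l₁ m₁) y - pd b (fun z => P z l₂ m₂) y) (((differentiable_pd (hP2 l₁ m₁) a).sub
            (differentiable_pd (hP2 l₂ m₂) b)) x) c k,
        pd_sub ((differentiable_pd (hP2 l₁ m₁) a) x) ((differentiable_pd (hP2 l₂ m₂) b) x) k,
        mul_sub]
    have hcomm : ∀ (a b l m : Fin 3) (x : Fin 3 → ℝ),
        pd a (fun y => pd b (fun z => P z l m) y) x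
          = pd b (fun y => pd a (fun z => P z l m) y) x :=
      fun a b l m x => pd_comm (hP2 l m) a b x
    have e10 : mCurl (fun y => α₁ • (mCurl P y)ᵀ) x 1 0 = mCurl (fun y => α₁ • (mCurl P y)ᵀ) x 0 1 := by
      simp only [mCurl, vcurl, Matrix.of_apply, Matrix.transpose_apply, Matrix.smul_apply,
        smul_eq_mul, Matrix.cons_val_zero, Matrix.cons_val_one, Matrix.head_cons,
        Matrix.cons_val_two, Matrix.tail_cons]
      simp only [key]
      simp only [hsym 1 0, hsym 2 0, hsym 2 1]
      simp only [hcomm 1 0, hcomm 2 0, hcomm 2 1]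
      ring
    have e20 : mCurl (fun y => α₁ • (mCurl P y)ᵀ) x 2 0 = mCurl (fun y => α₁ • (mCurl P y)ᵀ) x 0 2 := by
      simp only [mCurl, vcurl, Matrix.of_apply, Matrix.transpose_apply, Matrix.smul_apply,
        smul_eq_mul, Matrix.cons_val_zero, Matrix.cons_val_one, Matrix.head_cons,
        Matrix.cons_val_two, Matrix.tail_cons]
      simp only [key]
      simp only [hsym 1 0, hsym 2 0, hsym 2 1]
      simp only [hcomm 1 0, hcomm 2 0, hcomm 2 1]
      ring
    have e21 : mCurl (fun y => α₁ • (mCurl P y)ᵀ) x 2 1 = mCurl (fun y => α₁ • (mCurl P y)ᵀ) x 1 2 := by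
      simp only [mCurl, vcurl, Matrix.of_apply, Matrix.transpose_apply, Matrix.smul_apply,
        smul_eq_mul, Matrix.cons_val_zero, Matrix.cons_val_one, Matrix.head_cons,
        Matrix.cons_val_two, Matrix.tail_cons]
      simp only [key]
      simp only [hsym 1 0, hsym 2 0, hsym 2 1]
      simp only [hcomm 1 0, hcomm 2 0, hcomm 2 1]
      ring
    refine mat_ext3 ?_ ?_ ?_ ?_ ?_ ?_ ?_ ?_ ?_ <;>
      first
        | rfl
        | exact e10 | exact e10.symm
        | exact e20 | exact e20.symm
        | exact e21 | exact e21.symm
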